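/- Fix α ∈ (0,1) and L̂ > 0. Suppose there exist a symmetric positive definite matrix S ∈ ℝ^{n_x×n_x}, a matrix Y ∈ ℝ^{n_u×n_x}, and a scalar ν > 0 such that the symmetric 4×4 block matrix with block rows [−α²S, 0, (AS + BY)ᵀ, L̂ (C_q S)ᵀ], [0, −νI_{n_φ}, ν Gᵀ, 0], [AS + BY, νG, −S, 0], [L̂ C_q S, 0, 0, −ν I_{n_q}] is negative semidefinite. Then the matrices K₀ = Y S⁻¹ and P = S⁻¹ and the scalar ν satisfy Ψ + Γᵀ M(L̂) Γ ⪯ 0 with the same α and L̂. (Theorem 3.) -/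

import Mathlib

open Matrix

/-- **Theorem 3.** Fix `α ∈ (0,1)` and `L̂ > 0`. If there exist `S ≻ 0`, `Y` and
`ν > 0` satisfying the 4×4 block LMI with block rows
`[−α²S, 0, (AS+BY)ᵀ, L̂(C_qS)ᵀ]`, `[0, −νI, νGᵀ, 0]`, `[AS+BY, νG, −S, 0]`,
`[L̂C_qS, 0, 0, −νI]`, then `K₀ = YS⁻¹`, `P = S⁻¹` and `ν` satisfy
`Ψ + Γᵀ M(L̂) Γ ⪯ 0` with the same `α` and `L̂`. -/
theorem LMI_implies_multiplier_condition
    {nx nu nφ nq : ℕ}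
    (A : Matrix (Fin nx) (Fin nx) ℝ) (B : Matrix (Fin nx) (Fin nu) ℝ)
    (G : Matrix (Fin nx) (Fin nφ) ℝ) (Cq : Matrix (Fin nq) (Fin nx) ℝ)
    (α : ℝ) (hα : α ∈ Set.Ioo (0 : ℝ) 1) (Lhat : ℝ) (hLhat : 0 < Lhat)
    (S : Matrix (Fin nx) (Fin nx) ℝ) (hS : S.PosDef)
    (Y : Matrix (Fin nu) (Fin nx) ℝ) (ν : ℝ) (hν : 0 < ν)
    (hLMI :
      (-(Matrix.fromBlocks
          (Matrix.fromBlocks ((-(α ^ 2)) • S) 0 0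
            ((-ν) • (1 : Matrix (Fin nφ) (Fin nφ) ℝ)))
          (Matrix.fromBlocks ((A * S + B * Y)ᵀ) (Lhat • (Cq * S)ᵀ)
            (ν • Gᵀ) 0)
          (Matrix.fromBlocks (A * S + B * Y) (ν • G)
            (Lhat • (Cq * S)) 0)
          (Matrix.fromBlocks (-S) 0 0
            ((-ν) • (1 : Matrix (Fin nq) (Fin nq) ℝ))))).PosSemidef) :
    (-(Matrix.fromBlocks
        ((A + B * (Y * S⁻¹))ᵀ * S⁻¹ * (A + B * (Y * S⁻¹)) - α ^ 2 • S⁻¹)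
        ((A + B * (Y * S⁻¹))ᵀ * S⁻¹ * G)
        (Gᵀ * S⁻¹ * (A + B * (Y * S⁻¹)))
        (Gᵀ * S⁻¹ * G) +
      (Matrix.fromBlocks Cq 0 0 (1 : Matrix (Fin nφ) (Fin nφ) ℝ))ᵀ *
        Matrix.fromBlocks ((ν⁻¹ * Lhat ^ 2) • (1 : Matrix (Fin nq) (Fin nq) ℝ)) 0 0
          ((-ν⁻¹) • (1 : Matrix (Fin nφ) (Fin nφ) ℝ)) *
        Matrix.fromBlocks Cq 0 0 (1 : Matrix (Fin nφ) (Fin nφ) ℝ))).PosSemidef := by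
  have hdet : IsUnit S.det := (Matrix.isUnit_iff_isUnit_det S).mp hS.isUnit
  have h1 : S * S⁻¹ = 1 := Matrix.mul_nonsing_inv S hdet
  have h2 : S⁻¹ * S = 1 := Matrix.nonsing_inv_mul S hdet
  have hSymm : Sᵀ = S := by
    have := hS.isHermitian
    rwa [Matrix.IsHermitian, Matrix.conjTranspose_eq_transpose_of_trivial] at this
  have hPsymm : (S⁻¹)ᵀ = S⁻¹ := by rw [Matrix.transpose_nonsing_inv, hSymm]
  set Z : Matrix (Fin nx) (Fin nx) ℝ := A * S + B * Y with hZ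
  have hK : A + B * (Y * S⁻¹) = Z * S⁻¹ := by
    rw [hZ, Matrix.add_mul, Matrix.mul_assoc, h1, Matrix.mul_one, Matrix.mul_assoc]
  have e1 : ∀ {m : Type} (X : Matrix (Fin nx) m ℝ), S * (S⁻¹ * X) = X := fun X => by
    rw [← Matrix.mul_assoc, h1, Matrix.one_mul]
  have e2 : ∀ {m : Type} (X : Matrix (Fin nx) m ℝ), S⁻¹ * (S * X) = X := fun X => by
    rw [← Matrix.mul_assoc, h2, Matrix.one_mul]
  set U : Matrix (Fin nx ⊕ Fin nφ) (Fin nx ⊕ Fin nφ) ℝ :=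
    Matrix.fromBlocks S⁻¹ 0 0 (ν⁻¹ • 1) with hU
  set W : Matrix (Fin nx ⊕ Fin nq) (Fin nx ⊕ Fin nφ) ℝ :=
    Matrix.fromBlocks (S⁻¹ * Z * S⁻¹) (S⁻¹ * G) ((ν⁻¹ * Lhat) • Cq) 0 with hW
  set V := Matrix.fromRows U W with hV
  have key := hLMI.conjTranspose_mul_mul_same V
  have hconj : Vᴴ = Vᵀ := Matrix.conjTranspose_eq_transpose_of_trivial V
  rw [hconj] at key
  have main :
      Vᵀ *
        (-(Matrix.fromBlocks
          (Matrix.fromBlocks ((-(α ^ 2)) • S) 0 0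
            ((-ν) • (1 : Matrix (Fin nφ) (Fin nφ) ℝ)))
          (Matrix.fromBlocks (Zᵀ) (Lhat • (Cq * S)ᵀ)
            (ν • Gᵀ) 0)
          (Matrix.fromBlocks Z (ν • G)
            (Lhat • (Cq * S)) 0)
          (Matrix.fromBlocks (-S) 0 0
            ((-ν) • (1 : Matrix (Fin nq) (Fin nq) ℝ))))) * V =
      (-(Matrix.fromBlocks
        ((A + B * (Y * S⁻¹))ᵀ * S⁻¹ * (A + B * (Y * S⁻¹)) - α ^ 2 • S⁻¹)
        ((A + B * (Y * S⁻¹))ᵀ * S⁻¹ * G)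
        (Gᵀ * S⁻¹ * (A + B * (Y * S⁻¹)))
        (Gᵀ * S⁻¹ * G) +
      (Matrix.fromBlocks Cq 0 0 (1 : Matrix (Fin nφ) (Fin nφ) ℝ))ᵀ *
        Matrix.fromBlocks ((ν⁻¹ * Lhat ^ 2) • (1 : Matrix (Fin nq) (Fin nq) ℝ)) 0 0
          ((-ν⁻¹) • (1 : Matrix (Fin nφ) (Fin nφ) ℝ)) *
        Matrix.fromBlocks Cq 0 0 (1 : Matrix (Fin nφ) (Fin nφ) ℝ))) := by
    rw [hV, Matrix.transpose_fromRows, Matrix.mul_neg, Matrix.neg_mul, neg_inj, hK]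
    rw [Matrix.mul_assoc, Matrix.fromBlocks_mul_fromRows, Matrix.fromCols_mul_fromRows]
    simp only [hU, hW, Matrix.fromBlocks_transpose, Matrix.fromBlocks_multiply,
      Matrix.fromBlocks_add, Matrix.mul_add, Matrix.add_mul, Matrix.transpose_smul,
      Matrix.transpose_mul, Matrix.transpose_one, hPsymm, hSymm,
      Matrix.mul_zero, Matrix.zero_mul, Matrix.mul_one, Matrix.one_mul,
      add_zero, zero_add, smul_zero, zero_smul]
    rw [Matrix.fromBlocks_inj]
    have hνν : ν * ν⁻¹ = 1 := mul_inv_cancel₀ hν.ne'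
    have hνν' : ν⁻¹ * ν = 1 := inv_mul_cancel₀ hν.ne'
    have hc : ν⁻¹ * Lhat * ν * (ν⁻¹ * Lhat) = ν⁻¹ * Lhat ^ 2 := by
      field_simp
    refine ⟨?_, ?_, ?_, ?_⟩ <;>
    · simp only [Matrix.transpose_zero, Matrix.transpose_mul, hPsymm, Matrix.zero_mul,
        Matrix.mul_zero, add_zero, zero_add, Matrix.smul_mul, Matrix.mul_smul, smul_smul,
        Matrix.neg_mul, Matrix.mul_neg, neg_smul, smul_neg, Matrix.mul_assoc,
        e1, e2, h1, h2, hνν, hνν', Matrix.mul_one, Matrix.one_mul, one_smul, hc]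
      try simp only [smul_zero, neg_zero, add_zero, zero_add]
      module
  rw [← main]
  exact key
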